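/- For every nonnegative function f on ℝⁿ and t > 0, the Hessian of log(Q_t f) satisfies ∇²log(Q_t f) ≥ -(1/(2t))·id pointwise (wherever Q_t f > 0). -/

import Mathlib

open MeasureTheory

noncomputable def stdGaussian (n : ℕ) : Measure (EuclideanSpace ℝ (Fin n)) :=
  volume.withDensity
    (fun x => ENNReal.ofReal ((2 * Real.pi) ^ (-(n : ℝ) / 2) * Real.exp (-‖x‖ ^ 2 / 2)))

noncomputable def OU (n : ℕ) (t : ℝ) (f : EuclideanSpace ℝ (Fin n) → ℝ)
    (x : EuclideanSpace ℝ (Fin n)) : ℝ :=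
  ∫ y, f (Real.exp (-t) • x + Real.sqrt (1 - Real.exp (-2 * t)) • y) ∂(stdGaussian n)

/-- Parallelogram-type identity for convex combinations. -/
lemma key_sq {n : ℕ} (p q : EuclideanSpace ℝ (Fin n)) {a b : ℝ} (hab : a + b = 1) :
    a * ‖p‖ ^ 2 + b * ‖q‖ ^ 2 - ‖a • p + b • q‖ ^ 2 = a * b * ‖p - q‖ ^ 2 := by
  have h1 : ‖a • p + b • q‖ ^ 2
      = a ^ 2 * ‖p‖ ^ 2 + 2 * (a * b) * inner ℝ p q + b ^ 2 * ‖q‖ ^ 2 := by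
    rw [norm_add_sq_real, real_inner_smul_left, real_inner_smul_right, norm_smul, norm_smul]
    simp [mul_pow, sq_abs]
    ring
  have h2 : ‖p - q‖ ^ 2 = ‖p‖ ^ 2 - 2 * inner ℝ p q + ‖q‖ ^ 2 := norm_sub_sq_real p q
  have hb : b = 1 - a := by linarith
  subst hb
  rw [h1, h2]; ring

lemma exp_coef_ineq {t : ℝ} (ht : 0 < t) :
    Real.exp (-2 * t) * (4 * t) ≤ (1 - Real.exp (-2 * t)) * 2 := by
  have h2t : 2 * t + 1 ≤ Real.exp (2 * t) := Real.add_one_le_exp (2 * t)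
  have hprod : Real.exp (-2 * t) * Real.exp (2 * t) = 1 := by
    rw [← Real.exp_add]; norm_num
  nlinarith [mul_le_mul_of_nonneg_right h2t (Real.exp_pos (-2 * t)).le, hprod,
    Real.exp_pos (-2 * t)]

theorem stmt_1 {n : ℕ} (f : EuclideanSpace ℝ (Fin n) → ℝ) (hf : ∀ x, 0 ≤ f x)
    (t : ℝ) (ht : 0 < t) (hpos : ∀ x, 0 < OU n t f x) :
    ConvexOn ℝ Set.univ (fun x => Real.log (OU n t f x) + (1 / (4 * t)) * ‖x‖ ^ 2) := by
  classical
  set ρ : ℝ := Real.exp (-t) with hρdef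
  have hρpos : 0 < ρ := Real.exp_pos _
  have hσsq : 0 < 1 - Real.exp (-2 * t) := by
    have : Real.exp (-2 * t) < 1 := Real.exp_lt_one_iff.mpr (by linarith)
    linarith
  set σ : ℝ := Real.sqrt (1 - Real.exp (-2 * t)) with hσdef
  have hσ : 0 < σ := Real.sqrt_pos.mpr hσsq
  have hσ2 : σ ^ 2 = 1 - Real.exp (-2 * t) := Real.sq_sqrt hσsq.le
  -- the real density and its ENNReal version
  set d : EuclideanSpace ℝ (Fin n) → ℝ :=
    fun y => (2 * Real.pi) ^ (-(n : ℝ) / 2) * Real.exp (-‖y‖ ^ 2 / 2) with hd_def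
  have hCpos : (0:ℝ) < (2 * Real.pi) ^ (-(n : ℝ) / 2) :=
    Real.rpow_pos_of_pos (by positivity) _
  have hdpos : ∀ y, 0 < d y := fun y => mul_pos hCpos (Real.exp_pos _)
  set D : EuclideanSpace ℝ (Fin n) → ENNReal := fun y => ENNReal.ofReal (d y) with hD_def
  have hDmeas : Measurable D := by
    apply Measurable.ennreal_ofReal
    fun_prop
  have habs : (volume : Measure (EuclideanSpace ℝ (Fin n))) ≪ stdGaussian n := by
    refine MeasureTheory.withDensity_absolutelyContinuous' hDmeas.aemeasurable ?_
    exact Filter.Eventually.of_forall fun y => (ENNReal.ofReal_pos.mpr (hdpos y)).ne'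
  have hint : ∀ x, Integrable (fun y => f (ρ • x + σ • y)) (stdGaussian n) := by
    intro x
    by_contra h
    have := hpos x
    rw [OU, integral_undef h] at this
    exact lt_irrefl 0 this
  have hmeas : ∀ x, AEMeasurable (fun y => ENNReal.ofReal (f (ρ • x + σ • y)))
      (volume : Measure (EuclideanSpace ℝ (Fin n))) := by
    intro x
    exact (((hint x).1.aemeasurable).mono' habs).ennreal_ofReal
  have hL : ∀ x, ENNReal.ofReal (OU n t f x)
      = ∫⁻ y, D y * ENNReal.ofReal (f (ρ • x + σ • y)) := by
    intro x
    rw [OU, MeasureTheory.ofReal_integral_eq_lintegral_ofReal (hint x)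
      (Filter.Eventually.of_forall fun y => hf _)]
    rw [stdGaussian, lintegral_withDensity_eq_lintegral_mul₀ hDmeas.aemeasurable (hmeas x)]
    rfl
  refine ⟨convex_univ, ?_⟩
  rintro x₁ - x₂ - a b ha hb hab
  rcases ha.lt_or_eq with ha' | ha'
  swap
  · obtain rfl : a = 0 := ha'.symm
    obtain rfl : b = 1 := by linarith
    simp
  rcases hb.lt_or_eq with hb' | hb'
  swap
  · obtain rfl : b = 0 := hb'.symm
    obtain rfl : a = 1 := by linarith
    simp
  -- main case 0 < a, 0 < b
  set xθ := a • x₁ + b • x₂ with hxθ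
  set v : EuclideanSpace ℝ (Fin n) := (ρ / σ) • (x₂ - x₁) with hv
  have hσv : σ • v = ρ • (x₂ - x₁) := by
    rw [hv, smul_smul, mul_div_cancel₀ _ hσ.ne']
  have harg1 : ∀ y, ρ • x₁ + σ • (y + b • v) = ρ • xθ + σ • y := by
    intro y
    have h : σ • (y + b • v) = σ • y + b • (σ • v) := by module
    rw [h, hσv, hxθ]
    have hb1 : b = 1 - a := by linarith
    rw [hb1]; module
  have harg2 : ∀ y, ρ • x₂ + σ • (y - a • v) = ρ • xθ + σ • y := by
    intro y
    have h : σ • (y - a • v) = σ • y - a • (σ • v) := by module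
    rw [h, hσv, hxθ]
    have hb1 : b = 1 - a := by linarith
    rw [hb1]; module
  -- F and the two translated functions
  set F : EuclideanSpace ℝ (Fin n) → ENNReal :=
    fun y => ENNReal.ofReal (f (ρ • xθ + σ • y)) with hF
  set u : EuclideanSpace ℝ (Fin n) → ENNReal := fun y => D (y + b • v) * F y with hu_def
  set w : EuclideanSpace ℝ (Fin n) → ENNReal := fun y => D (y - a • v) * F y with hw_def
  have hFmeas : AEMeasurable F (volume : Measure (EuclideanSpace ℝ (Fin n))) := hmeas xθ
  have humeas : AEMeasurable u (volume : Measure (EuclideanSpace ℝ (Fin n))) :=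
    ((hDmeas.comp (measurable_add_const (b • v))).aemeasurable).mul hFmeas
  have hwmeas : AEMeasurable w (volume : Measure (EuclideanSpace ℝ (Fin n))) := by
    have hsub : Measurable fun y : EuclideanSpace ℝ (Fin n) => y - a • v := by fun_prop
    exact ((hDmeas.comp hsub).aemeasurable).mul hFmeas
  set E : ℝ := a * b * ‖v‖ ^ 2 / 2 with hE
  -- pointwise identity
  have hpt : ∀ y, D y * F y = ENNReal.ofReal (Real.exp E) * (u y ^ a * w y ^ b) := by
    intro y
    have hnorm : a * ‖y + b • v‖ ^ 2 + b * ‖y - a • v‖ ^ 2 - ‖y‖ ^ 2 = a * b * ‖v‖ ^ 2 := by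
      have h1 : a • (y + b • v) + b • (y - a • v) = (a + b) • y := by module
      have h2 : (y + b • v) - (y - a • v) = (a + b) • v := by module
      have hks := key_sq (y + b • v) (y - a • v) hab
      rw [h1, h2, hab, one_smul, one_smul] at hks
      linarith
    have hdid : d y = Real.exp E * (d (y + b • v) ^ a * d (y - a • v) ^ b) := by
      obtain ⟨c, hc⟩ : ∃ c, (2 * Real.pi) ^ (-(n : ℝ) / 2) = Real.exp c :=
        ⟨Real.log _, (Real.exp_log hCpos).symm⟩
      rw [hd_def]
      simp only
      rw [hc, ← Real.exp_add, ← Real.exp_add, ← Real.exp_add, ← Real.exp_mul, ← Real.exp_mul,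
        ← Real.exp_add, ← Real.exp_add]
      congr 1
      rw [hE]
      linear_combination (-c) * hab + (1/2 : ℝ) * hnorm
    set fy := f (ρ • xθ + σ • y) with hfy_def
    have hfy : 0 ≤ fy := hf _
    have hfab : fy = fy ^ a * fy ^ b := by
      rw [← Real.rpow_add' hfy (by rw [hab]; norm_num), hab, Real.rpow_one]
    -- real pointwise identity
    have hreal : d y * fy = Real.exp E * ((d (y + b • v) * fy) ^ a * (d (y - a • v) * fy) ^ b) := by
      rw [Real.mul_rpow (hdpos _).le hfy, Real.mul_rpow (hdpos _).le hfy]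
      nth_rewrite 1 [hdid]
      nth_rewrite 1 [hfab]
      ring
    have hDyFy : D y * F y = ENNReal.ofReal (d y * fy) := by
      rw [hD_def, hF]
      exact (ENNReal.ofReal_mul (hdpos y).le).symm
    have huy : u y = ENNReal.ofReal (d (y + b • v) * fy) := by
      rw [hu_def, hD_def, hF]
      exact (ENNReal.ofReal_mul (hdpos _).le).symm
    have hwy : w y = ENNReal.ofReal (d (y - a • v) * fy) := by
      rw [hw_def, hD_def, hF]
      exact (ENNReal.ofReal_mul (hdpos _).le).symm
    rw [hDyFy, hreal, huy, hwy,
      ENNReal.ofReal_mul (Real.exp_pos _).le,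
      ENNReal.ofReal_mul (Real.rpow_nonneg (mul_nonneg (hdpos _).le hfy) _),
      ← ENNReal.ofReal_rpow_of_nonneg (mul_nonneg (hdpos _).le hfy) ha'.le,
      ← ENNReal.ofReal_rpow_of_nonneg (mul_nonneg (hdpos _).le hfy) hb'.le]
  -- translation invariance
  have hLu : ∫⁻ y, u y = ENNReal.ofReal (OU n t f x₁) := by
    have : ∀ y, u y = (fun z => D z * ENNReal.ofReal (f (ρ • x₁ + σ • z))) (y + b • v) := by
      intro y
      rw [hu_def]
      simp only
      rw [harg1 y, hF]
    calc ∫⁻ y, u y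
        = ∫⁻ y, (fun z => D z * ENNReal.ofReal (f (ρ • x₁ + σ • z))) (y + b • v) :=
          lintegral_congr this
      _ = ∫⁻ z, D z * ENNReal.ofReal (f (ρ • x₁ + σ • z)) :=
          lintegral_add_right_eq_self
            (fun z => D z * ENNReal.ofReal (f (ρ • x₁ + σ • z))) (b • v)
      _ = ENNReal.ofReal (OU n t f x₁) := (hL x₁).symm
  have hLw : ∫⁻ y, w y = ENNReal.ofReal (OU n t f x₂) := by
    have : ∀ y, w y = (fun z => D z * ENNReal.ofReal (f (ρ • x₂ + σ • z))) (y + -(a • v)) := by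
      intro y
      rw [hw_def]
      simp only
      rw [← sub_eq_add_neg, harg2 y, hF]
    calc ∫⁻ y, w y
        = ∫⁻ y, (fun z => D z * ENNReal.ofReal (f (ρ • x₂ + σ • z))) (y + -(a • v)) :=
          lintegral_congr this
      _ = ∫⁻ z, D z * ENNReal.ofReal (f (ρ • x₂ + σ • z)) :=
          lintegral_add_right_eq_self
            (fun z => D z * ENNReal.ofReal (f (ρ • x₂ + σ • z))) (-(a • v))
      _ = ENNReal.ofReal (OU n t f x₂) := (hL x₂).symm
  -- Hölder
  have hpq : (1 / a).HolderConjugate (1 / b) := by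
    rw [Real.holderConjugate_iff]; constructor
    · rw [lt_div_iff₀ ha']; linarith
    · rw [one_div, one_div, inv_inv, inv_inv]; exact hab
  have holder : ∫⁻ y, u y ^ a * w y ^ b
      ≤ (∫⁻ y, u y) ^ a * (∫⁻ y, w y) ^ b := by
    have h := ENNReal.lintegral_mul_le_Lp_mul_Lq volume hpq
      (humeas.pow_const a) (hwmeas.pow_const b)
    simp only [Pi.mul_apply] at h
    calc ∫⁻ y, u y ^ a * w y ^ b
        ≤ (∫⁻ y, (u y ^ a) ^ (1/a)) ^ (1 / (1/a)) * (∫⁻ y, (w y ^ b) ^ (1/b)) ^ (1 / (1/b)) := h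
      _ = (∫⁻ y, u y) ^ a * (∫⁻ y, w y) ^ b := by
          simp_rw [← ENNReal.rpow_mul, mul_one_div_cancel ha'.ne', mul_one_div_cancel hb'.ne',
            ENNReal.rpow_one, one_div_one_div]
  -- combine
  have hmain : ENNReal.ofReal (OU n t f xθ)
      ≤ ENNReal.ofReal (Real.exp E) * (ENNReal.ofReal (OU n t f x₁) ^ a
        * ENNReal.ofReal (OU n t f x₂) ^ b) := by
    calc ENNReal.ofReal (OU n t f xθ)
        = ∫⁻ y, D y * F y := hL xθ
      _ = ∫⁻ y, ENNReal.ofReal (Real.exp E) * (u y ^ a * w y ^ b) := lintegral_congr hpt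
      _ = ENNReal.ofReal (Real.exp E) * ∫⁻ y, u y ^ a * w y ^ b :=
          lintegral_const_mul' _ _ ENNReal.ofReal_ne_top
      _ ≤ ENNReal.ofReal (Real.exp E) * ((∫⁻ y, u y) ^ a * (∫⁻ y, w y) ^ b) := by
          exact mul_le_mul_right holder _
      _ = ENNReal.ofReal (Real.exp E) * (ENNReal.ofReal (OU n t f x₁) ^ a
          * ENNReal.ofReal (OU n t f x₂) ^ b) := by rw [hLu, hLw]
  -- convert to a real inequality
  have hrhs : ENNReal.ofReal (Real.exp E) * (ENNReal.ofReal (OU n t f x₁) ^ a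
      * ENNReal.ofReal (OU n t f x₂) ^ b)
      = ENNReal.ofReal (Real.exp E * (OU n t f x₁ ^ a * OU n t f x₂ ^ b)) := by
    rw [ENNReal.ofReal_rpow_of_nonneg (hpos x₁).le ha'.le,
      ENNReal.ofReal_rpow_of_nonneg (hpos x₂).le hb'.le,
      ← ENNReal.ofReal_mul (Real.rpow_nonneg (hpos x₁).le _),
      ← ENNReal.ofReal_mul (Real.exp_pos _).le]
  rw [hrhs] at hmain
  have hp1 : 0 < OU n t f x₁ ^ a := Real.rpow_pos_of_pos (hpos x₁) a
  have hp2 : 0 < OU n t f x₂ ^ b := Real.rpow_pos_of_pos (hpos x₂) b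
  have hreal : OU n t f xθ ≤ Real.exp E * (OU n t f x₁ ^ a * OU n t f x₂ ^ b) :=
    (ENNReal.ofReal_le_ofReal_iff
      (mul_nonneg (Real.exp_pos _).le (mul_nonneg hp1.le hp2.le))).mp hmain
  have hlog : Real.log (OU n t f xθ)
      ≤ E + (a * Real.log (OU n t f x₁) + b * Real.log (OU n t f x₂)) := by
    have h1 := Real.log_le_log (hpos xθ) hreal
    rw [Real.log_mul (Real.exp_pos _).ne' (mul_pos hp1 hp2).ne',
      Real.log_mul hp1.ne' hp2.ne',
      Real.log_exp, Real.log_rpow (hpos x₁), Real.log_rpow (hpos x₂)] at h1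
    exact h1
  -- the quadratic part
  have hquad : E + (1 / (4 * t)) * ‖xθ‖ ^ 2
      ≤ a * ((1 / (4 * t)) * ‖x₁‖ ^ 2) + b * ((1 / (4 * t)) * ‖x₂‖ ^ 2) := by
    have hks := key_sq x₁ x₂ hab
    have hvnorm : ‖v‖ ^ 2 = (ρ / σ) ^ 2 * ‖x₂ - x₁‖ ^ 2 := by
      rw [hv, norm_smul, mul_pow, Real.norm_eq_abs, sq_abs]
    have hnormrev : ‖x₂ - x₁‖ = ‖x₁ - x₂‖ := norm_sub_rev _ _
    -- need: E ≤ (1/(4t)) * (a*b*‖x₁-x₂‖^2)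
    have hcoef : ρ ^ 2 / σ ^ 2 / 2 ≤ 1 / (4 * t) := by
      have hexp2 : ρ ^ 2 = Real.exp (-2 * t) := by
        rw [hρdef, sq, ← Real.exp_add]; congr 1; ring
      rw [hexp2, hσ2, div_div, div_le_div_iff₀ (by positivity) (by positivity)]
      have := exp_coef_ineq ht
      linarith
    have hE' : E = a * b * ((ρ ^ 2 / σ ^ 2 / 2) * ‖x₁ - x₂‖ ^ 2) := by
      rw [hE, hvnorm, hnormrev, div_pow]; ring
    have hEle : E ≤ (1 / (4 * t)) * (a * b * ‖x₁ - x₂‖ ^ 2) := by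
      rw [hE']
      have hab2 : 0 ≤ a * b := mul_nonneg ha hb
      have := mul_le_mul_of_nonneg_left
        (mul_le_mul_of_nonneg_right hcoef (sq_nonneg ‖x₁ - x₂‖)) hab2
      calc a * b * (ρ ^ 2 / σ ^ 2 / 2 * ‖x₁ - x₂‖ ^ 2)
          ≤ a * b * (1 / (4 * t) * ‖x₁ - x₂‖ ^ 2) := this
        _ = 1 / (4 * t) * (a * b * ‖x₁ - x₂‖ ^ 2) := by ring
    have h5 : (1 / (4 * t)) * (a * ‖x₁‖ ^ 2 + b * ‖x₂‖ ^ 2 - ‖a • x₁ + b • x₂‖ ^ 2)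
        = (1 / (4 * t)) * (a * b * ‖x₁ - x₂‖ ^ 2) := by rw [hks]
    linarith [hEle, h5]
  -- finish
  clear hpt hLu hLw hpq holder hmain humeas hwmeas hFmeas hmeas hL hint habs hDmeas hreal
  simp only [smul_eq_mul]
  calc Real.log (OU n t f (a • x₁ + b • x₂)) + 1 / (4 * t) * ‖a • x₁ + b • x₂‖ ^ 2
      = Real.log (OU n t f xθ) + 1 / (4 * t) * ‖xθ‖ ^ 2 := by rw [hxθ]
    _ ≤ E + (a * Real.log (OU n t f x₁) + b * Real.log (OU n t f x₂))
        + (a * ((1 / (4 * t)) * ‖x₁‖ ^ 2) + b * ((1 / (4 * t)) * ‖x₂‖ ^ 2)) - E := by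
        linarith
    _ = a * (Real.log (OU n t f x₁) + 1 / (4 * t) * ‖x₁‖ ^ 2)
        + b * (Real.log (OU n t f x₂) + 1 / (4 * t) * ‖x₂‖ ^ 2) := by ring
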